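/- Let G be a connected graph, f : G → G a simplicial map such that every edge of G is eventually mapped to a single fixed edge E₀, and let c₁, c₂ be two distinguished vertices ('critical points') such that every cycle of G not passing through both c₁ and c₂ has the property that its image under f contains a strictly shorter or equal-length cycle. If k is the graph distance between c₁ and c₂, then every cycle in G has length at least 2k. -/

import Mathlib

private lemma mem_tail_support_of_closed {V : Type*} {G : SimpleGraph V} {v w : V}
    {c : G.Walk v v} (hc : c.length ≠ 0) (hw : w ∈ c.support) : w ∈ c.support.tail := by
  cases c with
  | nil => simp at hc
  | cons h p =>
    simp only [SimpleGraph.Walk.support_cons, List.tail_cons]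
    simp only [SimpleGraph.Walk.support_cons, List.mem_cons] at hw
    rcases hw with rfl | hw
    · exact p.end_mem_support
    · exact hw

private lemma two_mul_dist_le_cycle_length {V : Type*} {G : SimpleGraph V} {u a b : V}
    (K : G.Walk u u) (hK : K.IsCycle) (ha : a ∈ K.support) (hb : b ∈ K.support) :
    2 * G.dist a b ≤ K.length := by
  classical
  set K' := K.rotate a ha with hK'
  have hlen : K'.length = K.length := by
    have := (K.rotate_edges a ha).perm.length_eq
    rwa [SimpleGraph.Walk.length_edges, SimpleGraph.Walk.length_edges] at this
  have hb' : b ∈ K'.support := by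
    rcases eq_or_ne b a with rfl | hba
    · exact K'.start_mem_support
    · have h3 := hK.three_le_length
      have htail : b ∈ K.support.tail :=
        mem_tail_support_of_closed (by omega) hb
      have : b ∈ K'.support.tail := ((K.support_rotate a ha).mem_iff).mpr htail
      exact List.mem_of_mem_tail this
  have h1 := G.dist_le (K'.takeUntil b hb')
  have h2 := G.dist_le (K'.dropUntil b hb')
  have hsum := congrArg SimpleGraph.Walk.length (K'.take_spec hb')
  rw [SimpleGraph.Walk.length_append] at hsum
  have hd : G.dist b a = G.dist a b := G.dist_comm
  omega

/-- Let `G` be connected, `f` a simplicial self-map under which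
every edge is eventually mapped to the fixed edge `E₀ = {x, y}`, and let
`c₁, c₂` be two critical vertices such that the image of any cycle missing one
of them contains a cycle of no greater length. Then every cycle of `G` has
length at least `2 * d(c₁, c₂)`. -/
theorem cycle_length_ge_twice_critical_distance {V : Type*} (G : SimpleGraph V)
    (hconn : G.Connected) (f : V → V)
    (hf : ∀ ⦃u v⦄, G.Adj u v → G.Adj (f u) (f v))
    (x y : V) (hE : G.Adj x y) (hfixE : Sym2.map f s(x, y) = s(x, y))
    (habs : ∀ e ∈ G.edgeSet, ∃ n : ℕ, Sym2.map (f^[n]) e = s(x, y))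
    (c₁ c₂ : V)
    (hcyc : ∀ (u : V) (K : G.Walk u u), K.IsCycle →
      ¬ (c₁ ∈ K.support ∧ c₂ ∈ K.support) →
      ∃ (u' : V) (C : G.Walk u' u'), C.IsCycle ∧ C.length ≤ K.length ∧
        ∀ e ∈ C.edges, e ∈ K.edges.map (Sym2.map f)) :
    ∀ (u : V) (K : G.Walk u u), K.IsCycle → 2 * G.dist c₁ c₂ ≤ K.length := by
  classical
  -- stability of the absorbing edge
  have hstab : ∀ (n : ℕ) (e : Sym2 V), Sym2.map (f^[n]) e = s(x, y) →
      Sym2.map (f^[n + 1]) e = s(x, y) := by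
    intro n e h
    rw [Function.iterate_succ', ← Sym2.map_map, h, hfixE]
  have hmono : ∀ (e : Sym2 V) (m n : ℕ), m ≤ n → Sym2.map (f^[m]) e = s(x, y) →
      Sym2.map (f^[n]) e = s(x, y) := by
    intro e m n hmn h
    induction n, hmn using Nat.le_induction with
    | base => exact h
    | succ n hmn ih => exact hstab n e ih
  -- a common absorption time for any list of edges
  have hcommon : ∀ l : List (Sym2 V), (∀ e ∈ l, e ∈ G.edgeSet) →
      ∃ N : ℕ, ∀ e ∈ l, Sym2.map (f^[N]) e = s(x, y) := by
    intro l hl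
    induction l with
    | nil => exact ⟨0, by simp⟩
    | cons a t ih =>
      obtain ⟨N₁, hN₁⟩ := ih (fun e he => hl e (List.mem_cons_of_mem _ he))
      obtain ⟨N₂, hN₂⟩ := habs a (hl a (List.mem_cons_self))
      refine ⟨max N₁ N₂, fun e he => ?_⟩
      rcases List.mem_cons.mp he with rfl | he
      · exact hmono e N₂ _ (le_max_right _ _) hN₂
      · exact hmono e N₁ _ (le_max_left _ _) (hN₁ e he)
  -- main induction on the absorption time
  have key : ∀ N : ℕ, ∀ (u : V) (K : G.Walk u u), K.IsCycle →
      (∀ e ∈ K.edges, Sym2.map (f^[N]) e = s(x, y)) → 2 * G.dist c₁ c₂ ≤ K.length := by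
    intro N
    induction N with
    | zero =>
      intro u K hK hall
      exfalso
      have h3 : 3 ≤ K.edges.length := by
        rw [K.length_edges]; exact hK.three_le_length
      have hnd := hK.edges_nodup
      rcases hKe : K.edges with _ | ⟨a, _ | ⟨b, l⟩⟩
      · rw [hKe] at h3; simp at h3
      · rw [hKe] at h3; simp at h3
      · have ha := hall a (by rw [hKe]; exact List.mem_cons_self)
        have hb := hall b (by rw [hKe]; exact List.mem_cons_of_mem _ (List.mem_cons_self))
        simp only [Function.iterate_zero, Sym2.map_id', id_eq] at ha hb
        rw [hKe] at hnd
        exact (List.nodup_cons.mp hnd).1 (by rw [ha, hb]; exact List.mem_cons_self)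
    | succ N ih =>
      intro u K hK hall
      by_cases hc : c₁ ∈ K.support ∧ c₂ ∈ K.support
      · exact two_mul_dist_le_cycle_length K hK hc.1 hc.2
      · obtain ⟨u', C, hC, hlen, hsub⟩ := hcyc u K hK hc
        refine le_trans (ih u' C hC ?_) hlen
        intro e he
        obtain ⟨e', he', rfl⟩ := List.mem_map.mp (hsub e he)
        rw [Sym2.map_map, ← Function.iterate_succ]
        exact hall e' he'
  intro u K hK
  obtain ⟨N, hN⟩ := hcommon K.edges (fun e he => K.edges_subset_edgeSet he)
  exact key N u K hK hN
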